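/- Let n, m, t be positive integers with m = n/(2t), let q = 2^t, and let U₀, U₁, …, U_{2^{n/2}} be the 2^{n/2} + 1 elements of a spread of 𝔽₂ⁿ. Let φ : {1, 2, …, 2^{n/2}} → ℤ_{2^t}^m be a bijection with coordinates φ(s) = (φ₁(s), …, φ_m(s)), and define f_j : 𝔽₂ⁿ → ℤ_{2^t} for 1 ≤ j ≤ m by f_j(x) = φ_j(s) if x ∈ U_s with 1 ≤ s ≤ 2^{n/2} and x ≠ 0, and f_j(x) = 0 if x ∈ U₀. Then F = (f₁, …, f_m) : 𝔽₂ⁿ → ℤ_{2^t}^m is a vectorial gbent function. -/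

import Mathlib

open scoped BigOperators

/-- `ζ_q = e^{2πi/q}`. -/
noncomputable def zeta (q : ℕ) : ℂ := Complex.exp (2 * Real.pi * Complex.I / q)

/-- The standard inner product `⟨u,x⟩ = Σᵢ uᵢxᵢ` on `𝔽₂ⁿ`. -/
def ip {n : ℕ} (u x : Fin n → ZMod 2) : ZMod 2 := ∑ i, u i * x i

/-- The generalized Walsh–Hadamard transform
`H_f(u) = Σ_x ζ_q^{f(x)} (−1)^{⟨u,x⟩}` of `f : 𝔽₂ⁿ → ℤ_q`. -/
noncomputable def gWHT {n q : ℕ} (f : (Fin n → ZMod 2) → ZMod q) (u : Fin n → ZMod 2) : ℂ :=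
  ∑ x : Fin n → ZMod 2, zeta q ^ (f x).val * (-1 : ℂ) ^ (ip u x).val

/-- `f` is gbent if `|H_f(u)| = 2^{n/2}` for all `u`. -/
def IsGbent {n q : ℕ} (f : (Fin n → ZMod 2) → ZMod q) : Prop :=
  ∀ u, ‖gWHT f u‖ = (2 : ℝ) ^ ((n : ℝ) / 2)

/-- `g` is the dual of `f`: `H_f(u) = 2^{n/2} ζ_q^{g(u)}` for all `u`. -/
def IsDualOf {n q : ℕ} (g f : (Fin n → ZMod 2) → ZMod q) : Prop :=
  ∀ u, gWHT f u = ((2 : ℝ) ^ ((n : ℝ) / 2) : ℝ) * zeta q ^ (g u).val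

/-- `f` is a regular gbent function:
`H_f(u) = 2^{n/2} ζ_q^{j_u}` for some `j_u ∈ ℤ_q`, for every `u`. -/
def IsRegularGbent {n q : ℕ} (f : (Fin n → ZMod 2) → ZMod q) : Prop :=
  IsGbent f ∧ ∀ u, ∃ j : ZMod q, gWHT f u = ((2 : ℝ) ^ ((n : ℝ) / 2) : ℝ) * zeta q ^ j.val

/-- The orthogonal complement of a subspace `U ⊆ 𝔽₂ⁿ` w.r.t. `⟨·,·⟩`. -/
def orthComp {n : ℕ} (U : Submodule (ZMod 2) (Fin n → ZMod 2)) : Set (Fin n → ZMod 2) :=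
  {u | ∀ x ∈ U, ip u x = 0}

/-- `F : 𝔽₂ⁿ → ℤ_q^m` is vectorial gbent if every component function
`c·F`, `c ≠ 0`, is gbent. -/
def IsVectorialGbent {n q m : ℕ} (F : (Fin n → ZMod 2) → Fin m → ZMod q) : Prop :=
  ∀ c : Fin m → ZMod q, c ≠ 0 → IsGbent (fun x => ∑ j, c j * F x j)

lemma chi_add (a b : ZMod 2) : ((-1:ℂ)) ^ (a + b).val = (-1:ℂ)^a.val * (-1:ℂ)^b.val := by
  have h : ∀ c : ZMod 2, c = 0 ∨ c = 1 := by decide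
  rcases h a with ha|ha <;> rcases h b with hb|hb <;> subst ha <;> subst hb <;>
    norm_num [show ((0:ZMod 2)+0).val = 0 from rfl, show ((0:ZMod 2)+1).val = 1 from rfl,
      show ((1:ZMod 2)+0).val = 1 from rfl, show ((1:ZMod 2)+1).val = 0 from rfl,
      show (2:ZMod 2).val = 0 by decide,
      show (0:ZMod 2).val = 0 from rfl, show (1:ZMod 2).val = 1 from rfl]

lemma ip_add_right {n : ℕ} (u x y : Fin n → ZMod 2) : ip u (x + y) = ip u x + ip u y := by
  simp [ip, mul_add, Finset.sum_add_distrib]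

lemma ip_zero_left {n : ℕ} (x : Fin n → ZMod 2) : ip 0 x = 0 := by simp [ip]

lemma ip_zero_right {n : ℕ} (u : Fin n → ZMod 2) : ip u 0 = 0 := by simp [ip]

lemma ip_single {n : ℕ} (u : Fin n → ZMod 2) (i : Fin n) : ip u (Pi.single i 1) = u i := by
  simp [ip, Pi.single_apply]

lemma zmod2_ne_zero {a : ZMod 2} (h : a ≠ 0) : a = 1 := by
  revert h; revert a; decide

open Finset in
lemma sum_chi_submodule {n : ℕ} (u : Fin n → ZMod 2) (V : Submodule (ZMod 2) (Fin n → ZMod 2))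
    [DecidablePred (· ∈ V)] :
    ∑ x ∈ univ.filter (· ∈ V), ((-1:ℂ)) ^ (ip u x).val =
      if ∀ x ∈ V, ip u x = 0 then ((univ.filter (· ∈ V)).card : ℂ) else 0 := by
  by_cases h : ∀ x ∈ V, ip u x = 0
  · rw [if_pos h]
    rw [Finset.sum_congr rfl (fun x hx => by
      rw [h x (Finset.mem_filter.mp hx).2])]
    simp
  · rw [if_neg h]
    push_neg at h
    obtain ⟨x0, hx0V, hx0⟩ := h
    have hx1 : ip u x0 = 1 := zmod2_ne_zero hx0
    set S := ∑ x ∈ univ.filter (· ∈ V), ((-1:ℂ)) ^ (ip u x).val with hS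
    have hself : ∀ y : Fin n → ZMod 2, y + x0 + x0 = y := by
      intro y; funext i
      simp [add_assoc, CharTwo.add_self_eq_zero]
    have h1 : (∑ x ∈ univ.filter (· ∈ V), ((-1:ℂ)) ^ (ip u (x + x0)).val) = S := by
      refine Finset.sum_equiv (Equiv.addRight x0) ?_ ?_
      · intro i
        simp only [Finset.mem_filter, Finset.mem_univ, true_and, Equiv.coe_addRight]
        constructor
        · intro hi; exact V.add_mem hi hx0V
        · intro hi
          have := V.add_mem hi hx0V
          rwa [hself] at this
      · intro i _; rfl
    have key : S = -S := by
      calc S = ∑ x ∈ univ.filter (· ∈ V), ((-1:ℂ)) ^ (ip u (x + x0)).val := h1.symm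
        _ = ∑ x ∈ univ.filter (· ∈ V), ((-1:ℂ)) ^ (ip u x).val * ((-1:ℂ)) ^ (ip u x0).val := by
            refine Finset.sum_congr rfl fun x _ => ?_
            rw [ip_add_right, chi_add]
        _ = -S := by
            rw [hx1]
            norm_num [show (1:ZMod 2).val = 1 from rfl, hS, ← Finset.sum_neg_distrib]
    linear_combination key / 2

open Finset in
/-- the spread construction of vectorial gbent functions from
`𝔽₂ⁿ` to `ℤ_{2^t}^m` with `m = n/(2t)`: given a spread `U₀, U₁, …, U_{2^{n/2}}`
of `𝔽₂ⁿ` and a bijection `φ` of `{1, …, 2^{n/2}}` onto `ℤ_{2^t}^m`, the function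
`F` equal to `φ(s)` on `U_s ∖ {0}` (`s ≥ 1`) and to `0` on `U₀` is vectorial
gbent. -/
theorem stmt13 (n t m : ℕ) (ht : 1 ≤ t) (hm : 1 ≤ m) (hn : n = 2 * t * m)
    (U0 : Submodule (ZMod 2) (Fin n → ZMod 2))
    (U : Fin (2 ^ (n / 2)) → Submodule (ZMod 2) (Fin n → ZMod 2))
    (hdim0 : Module.finrank (ZMod 2) U0 = n / 2)
    (hdim : ∀ s, Module.finrank (ZMod 2) (U s) = n / 2)
    (hint : ∀ s s', s ≠ s' → U s ⊓ U s' = ⊥)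
    (hint0 : ∀ s, U0 ⊓ U s = ⊥)
    (φ : Fin (2 ^ (n / 2)) → Fin m → ZMod (2 ^ t)) (hφ : Function.Bijective φ)
    (F : (Fin n → ZMod 2) → Fin m → ZMod (2 ^ t))
    (hF1 : ∀ s, ∀ x ∈ U s, x ≠ 0 → F x = φ s)
    (hF0 : ∀ x ∈ U0, F x = 0) :
    IsVectorialGbent F := by
  classical
  intro c hc u
  haveI : NeZero (2^t) := ⟨pow_ne_zero t two_ne_zero⟩
  have hneven : n = 2*(t*m) := by rw [hn]; ring
  have hn2 : n/2 = t*m := by omega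
  have hNpos : 0 < 2^(n/2) := Nat.pow_pos (by norm_num)
  -- cardinalities of the filters
  have cardfilt : ∀ V : Submodule (ZMod 2) (Fin n → ZMod 2),
      Module.finrank (ZMod 2) V = n/2 → (univ.filter (· ∈ V)).card = 2^(n/2) := by
    intro V hV
    have h1 : (univ.filter (· ∈ V)).card = Fintype.card {x // x ∈ V} :=
      (Fintype.card_subtype _).symm
    have h2 : Fintype.card V = 2 ^ Module.finrank (ZMod 2) V := by
      have := Module.card_eq_pow_finrank (K := ZMod 2) (V := V)
      rwa [ZMod.card] at this
    rw [h1]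
    rw [show Fintype.card {x // x ∈ V} = Fintype.card V from Fintype.card_congr (Equiv.refl _)]
    rw [h2, hV]
  -- the punctured pieces
  set A0 : Finset (Fin n → ZMod 2) := (univ.filter (· ∈ U0)).erase 0 with hA0
  set As : Fin (2^(n/2)) → Finset (Fin n → ZMod 2) :=
    fun s => (univ.filter (· ∈ U s)).erase 0 with hAs
  have h0mem : ∀ V : Submodule (ZMod 2) (Fin n → ZMod 2),
      (0 : Fin n → ZMod 2) ∈ univ.filter (· ∈ V) := by
    intro V; simp [Submodule.zero_mem]
  have cardA0 : A0.card = 2^(n/2) - 1 := by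
    rw [hA0, Finset.card_erase_of_mem (h0mem _), cardfilt U0 hdim0]
  have cardAs : ∀ s, (As s).card = 2^(n/2) - 1 := by
    intro s
    rw [hAs]
    simp only
    rw [Finset.card_erase_of_mem (h0mem _), cardfilt (U s) (hdim s)]
  have memA0 : ∀ x, x ∈ A0 ↔ x ∈ U0 ∧ x ≠ 0 := by
    intro x; rw [hA0]; simp [Finset.mem_erase, and_comm]
  have memAs : ∀ s x, x ∈ As s ↔ x ∈ U s ∧ x ≠ 0 := by
    intro s x; rw [hAs]; simp [Finset.mem_erase, and_comm]
  have hdisj0 : ∀ s, Disjoint A0 (As s) := by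
    intro s
    rw [Finset.disjoint_left]
    intro a ha ha'
    have h1 : a ∈ U0 ⊓ U s := ⟨((memA0 a).mp ha).1, ((memAs s a).mp ha').1⟩
    rw [hint0 s] at h1
    exact ((memA0 a).mp ha).2 (Submodule.mem_bot _ |>.mp h1)
  have hdisjs : ∀ s s', s ≠ s' → Disjoint (As s) (As s') := by
    intro s s' hss
    rw [Finset.disjoint_left]
    intro a ha ha'
    have h1 : a ∈ U s ⊓ U s' := ⟨((memAs s a).mp ha).1, ((memAs s' a).mp ha').1⟩
    rw [hint s s' hss] at h1
    exact ((memAs s a).mp ha).2 (Submodule.mem_bot _ |>.mp h1)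
  -- the covering property
  have hdisjB : Disjoint A0 (univ.biUnion As) := by
    rw [Finset.disjoint_biUnion_right]
    intro s _; exact hdisj0 s
  have cardbiU : (univ.biUnion As).card = 2^(n/2) * (2^(n/2) - 1) := by
    rw [Finset.card_biUnion (fun s _ s' _ h => hdisjs s s' h)]
    simp [cardAs, Finset.sum_const]
  have cardB : (A0 ∪ univ.biUnion As).card = 2^(n/2) * 2^(n/2) - 1 := by
    rw [Finset.card_union_of_disjoint hdisjB, cardA0, cardbiU]
    obtain ⟨k, hk⟩ : ∃ k, 2^(n/2) = k + 1 := ⟨2^(n/2) - 1, by omega⟩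
    rw [hk]
    simp only [Nat.add_sub_cancel]
    symm
    apply Nat.sub_eq_of_eq_add
    ring
  have cardX : Fintype.card (Fin n → ZMod 2) = 2^(n/2) * 2^(n/2) := by
    rw [show Fintype.card (Fin n → ZMod 2) = 2^n by simp [ZMod.card]]
    rw [← pow_add]
    congr 1
    omega
  have hBeq : A0 ∪ univ.biUnion As = univ.erase 0 := by
    apply Finset.eq_of_subset_of_card_le
    · intro x hx
      rw [Finset.mem_erase]
      refine ⟨?_, Finset.mem_univ _⟩
      rw [Finset.mem_union] at hx
      rcases hx with hx | hx
      · exact ((memA0 x).mp hx).2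
      · obtain ⟨s, _, hs⟩ := Finset.mem_biUnion.mp hx
        exact ((memAs s x).mp hs).2
    · rw [Finset.card_erase_of_mem (Finset.mem_univ _), Finset.card_univ, cardX, cardB]
  -- zeta facts
  have hqne : (2^t : ℕ) ≠ 0 := pow_ne_zero t two_ne_zero
  have hprim : IsPrimitiveRoot (zeta (2^t)) (2^t) := Complex.isPrimitiveRoot_exp (2^t) hqne
  have hq1 : zeta (2^t) ^ (2^t : ℕ) = 1 := hprim.pow_eq_one
  have psi_add : ∀ a b : ZMod (2^t), zeta (2^t) ^ (a+b).val = zeta (2^t) ^ a.val * zeta (2^t) ^ b.val := by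
    intro a b
    have hmod : a.val + b.val = (a+b).val + 2^t * ((a.val + b.val)/2^t) := by
      rw [ZMod.val_add]
      exact (Nat.mod_add_div _ _).symm
    calc zeta (2^t) ^ (a+b).val
        = zeta (2^t) ^ (a+b).val * (zeta (2^t) ^ (2^t : ℕ)) ^ ((a.val + b.val)/2^t) := by
          rw [hq1, one_pow, mul_one]
      _ = zeta (2^t) ^ (a.val + b.val) := by rw [← pow_mul, ← pow_add, ← hmod]
      _ = zeta (2^t) ^ a.val * zeta (2^t) ^ b.val := pow_add _ _ _
  have psi_ne_one : ∀ a : ZMod (2^t), a ≠ 0 → zeta (2^t) ^ a.val ≠ 1 := by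
    intro a ha h1
    rw [hprim.pow_eq_one_iff_dvd] at h1
    have h2 : a.val < 2^t := ZMod.val_lt a
    have h3 : a.val = 0 := Nat.eq_zero_of_dvd_of_lt h1 h2
    exact ha ((ZMod.val_eq_zero a).mp h3)
  have abszeta : ‖zeta (2^t)‖ = 1 := by
    have h1 : zeta (2^t) = Complex.exp (((2*Real.pi/(2^t:ℕ) : ℝ) : ℂ) * Complex.I) := by
      rw [zeta]
      congr 1
      push_cast
      ring
    rw [h1, Complex.norm_exp_ofReal_mul_I]
  -- vanishing of the full character sum
  have hZ : ∑ s : Fin (2^(n/2)), zeta (2^t) ^ ((∑ j, c j * φ s j : ZMod (2^t))).val = 0 := by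
    obtain ⟨j0, hj0⟩ : ∃ j0, c j0 ≠ 0 := by
      by_contra h
      push_neg at h
      exact hc (funext h)
    have h1 : ∑ s : Fin (2^(n/2)), zeta (2^t) ^ ((∑ j, c j * φ s j : ZMod (2^t))).val
        = ∑ y : Fin m → ZMod (2^t), zeta (2^t) ^ ((∑ j, c j * y j : ZMod (2^t))).val :=
      Fintype.sum_bijective φ hφ _ _ (fun s => rfl)
    rw [h1]
    set δ : Fin m → ZMod (2^t) := fun j => if j = j0 then 1 else 0 with hδ
    have h2 : (∑ y : Fin m → ZMod (2^t), zeta (2^t) ^ ((∑ j, c j * (y j + δ j) : ZMod (2^t))).val)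
        = ∑ y : Fin m → ZMod (2^t), zeta (2^t) ^ ((∑ j, c j * y j : ZMod (2^t))).val :=
      Fintype.sum_bijective (· + δ) (Equiv.addRight δ).bijective _ _ (fun y => rfl)
    have h3 : ∀ y : Fin m → ZMod (2^t),
        (∑ j, c j * (y j + δ j) : ZMod (2^t)) = c j0 + ∑ j, c j * y j := by
      intro y
      rw [show (∑ j, c j * (y j + δ j) : ZMod (2^t))
          = (∑ j, c j * y j) + ∑ j, c j * δ j by
        rw [← Finset.sum_add_distrib]
        exact Finset.sum_congr rfl fun j _ => by ring]
      rw [hδ]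
      simp [mul_ite, Finset.sum_ite_eq']
      ring
    have h4 : (∑ y : Fin m → ZMod (2^t), zeta (2^t) ^ ((∑ j, c j * y j : ZMod (2^t))).val)
        = zeta (2^t) ^ (c j0).val *
          ∑ y : Fin m → ZMod (2^t), zeta (2^t) ^ ((∑ j, c j * y j : ZMod (2^t))).val := by
      conv_lhs => rw [← h2]
      rw [Finset.sum_congr rfl (fun y _ => by rw [h3 y, psi_add])]
      rw [← Finset.mul_sum]
    have h5 : (zeta (2^t) ^ (c j0).val - 1) *
        (∑ y : Fin m → ZMod (2^t), zeta (2^t) ^ ((∑ j, c j * y j : ZMod (2^t))).val) = 0 := by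
      linear_combination (-1 : ℂ) * h4
    rcases mul_eq_zero.mp h5 with h | h
    · exact absurd (sub_eq_zero.mp h) (psi_ne_one _ hj0)
    · exact h
  -- decomposition of sums over the whole space
  have hpairwise : Set.PairwiseDisjoint (↑(univ : Finset (Fin (2^(n/2)))) : Set (Fin (2^(n/2)))) As :=
    fun s _ s' _ hss => hdisjs s s' hss
  have hsplit : ∀ g : (Fin n → ZMod 2) → ℂ,
      ∑ x : Fin n → ZMod 2, g x
        = g 0 + ((∑ x ∈ A0, g x) + ∑ s : Fin (2^(n/2)), ∑ x ∈ As s, g x) := by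
    intro g
    have h1 : (univ : Finset (Fin n → ZMod 2)) = insert 0 (univ.erase 0) :=
      (Finset.insert_erase (Finset.mem_univ 0)).symm
    rw [h1, Finset.sum_insert (Finset.notMem_erase _ _), ← hBeq,
      Finset.sum_union hdisjB, Finset.sum_biUnion hpairwise]
  have chi0 : ((-1:ℂ))^(ip u (0 : Fin n → ZMod 2)).val = 1 := by
    rw [ip_zero_right]
    norm_num [show (0:ZMod 2).val = 0 from rfl]
  have eraseSum : ∀ V : Submodule (ZMod 2) (Fin n → ZMod 2),
      ∑ x ∈ (univ.filter (· ∈ V)).erase 0, ((-1:ℂ))^(ip u x).val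
      = (∑ x ∈ univ.filter (· ∈ V), ((-1:ℂ))^(ip u x).val) - 1 := by
    intro V
    have h1 : ((-1:ℂ))^(ip u (0 : Fin n → ZMod 2)).val
        + ∑ x ∈ (univ.filter (· ∈ V)).erase 0, ((-1:ℂ))^(ip u x).val
        = ∑ x ∈ univ.filter (· ∈ V), ((-1:ℂ))^(ip u x).val :=
      Finset.add_sum_erase _ (fun x => ((-1:ℂ))^(ip u x).val) (h0mem V)
    rw [← h1, chi0]
    ring
  have hval0 : ∀ x ∈ A0, (∑ j, c j * F x j : ZMod (2^t)) = 0 := by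
    intro x hx
    rw [hF0 x ((memA0 x).mp hx).1]
    simp
  have hvals : ∀ s, ∀ x ∈ As s, (∑ j, c j * F x j : ZMod (2^t)) = ∑ j, c j * φ s j := by
    intro s x hx
    rw [hF1 s x ((memAs s x).mp hx).1 ((memAs s x).mp hx).2]
  have hF00 : (∑ j, c j * F 0 j : ZMod (2^t)) = 0 := by
    rw [hF0 0 U0.zero_mem]
    simp
  -- the main formula for the Walsh transform
  have Hval : gWHT (fun x => ∑ j, c j * F x j) u
      = (∑ x ∈ univ.filter (· ∈ U0), (-1:ℂ)^(ip u x).val)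
        + ∑ s : Fin (2^(n/2)), zeta (2^t) ^ ((∑ j, c j * φ s j : ZMod (2^t))).val *
            (∑ x ∈ univ.filter (· ∈ U s), (-1:ℂ)^(ip u x).val) := by
    rw [show gWHT (fun x => ∑ j, c j * F x j) u = ∑ x : Fin n → ZMod 2,
      zeta (2^t) ^ ((∑ j, c j * F x j : ZMod (2^t))).val * (-1:ℂ)^(ip u x).val from rfl]
    rw [hsplit]
    have e0 : zeta (2^t) ^ ((∑ j, c j * F 0 j : ZMod (2^t))).val
        * (-1:ℂ)^(ip u (0 : Fin n → ZMod 2)).val = 1 := by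
      rw [hF00, chi0, ZMod.val_zero]
      norm_num
    have e1 : ∑ x ∈ A0, zeta (2^t) ^ ((∑ j, c j * F x j : ZMod (2^t))).val
          * (-1:ℂ)^(ip u x).val
        = (∑ x ∈ univ.filter (· ∈ U0), (-1:ℂ)^(ip u x).val) - 1 := by
      rw [Finset.sum_congr rfl (fun x hx => by
        rw [hval0 x hx, ZMod.val_zero, pow_zero, one_mul])]
      rw [hA0, eraseSum U0]
    have e2 : ∀ s : Fin (2^(n/2)), ∑ x ∈ As s,
          zeta (2^t) ^ ((∑ j, c j * F x j : ZMod (2^t))).val * (-1:ℂ)^(ip u x).val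
        = zeta (2^t) ^ ((∑ j, c j * φ s j : ZMod (2^t))).val *
            ((∑ x ∈ univ.filter (· ∈ U s), (-1:ℂ)^(ip u x).val) - 1) := by
      intro s
      rw [Finset.sum_congr rfl (fun x hx => by rw [hvals s x hx])]
      rw [← Finset.mul_sum]
      rw [show As s = (univ.filter (· ∈ U s)).erase 0 from rfl, eraseSum (U s)]
    rw [e0, e1, Finset.sum_congr rfl (fun s _ => e2 s)]
    have e3 : ∑ s : Fin (2^(n/2)), zeta (2^t) ^ ((∑ j, c j * φ s j : ZMod (2^t))).val *
          ((∑ x ∈ univ.filter (· ∈ U s), (-1:ℂ)^(ip u x).val) - 1)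
        = (∑ s : Fin (2^(n/2)), zeta (2^t) ^ ((∑ j, c j * φ s j : ZMod (2^t))).val *
            (∑ x ∈ univ.filter (· ∈ U s), (-1:ℂ)^(ip u x).val))
          - ∑ s : Fin (2^(n/2)), zeta (2^t) ^ ((∑ j, c j * φ s j : ZMod (2^t))).val := by
      rw [← Finset.sum_sub_distrib]
      exact Finset.sum_congr rfl fun s _ => by ring
    rw [e3, hZ]
    ring
  -- the value 2^(n/2) as a real number
  have hRHS : (2:ℝ) ^ ((n:ℝ)/2) = ((2^(n/2) : ℕ) : ℝ) := by
    have h1 : (n:ℝ)/2 = ((n/2 : ℕ) : ℝ) := by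
      rw [hn2, hneven]
      push_cast
      ring
    rw [h1, Real.rpow_natCast]
    push_cast
    ring
  have hS0if : (∑ x ∈ univ.filter (· ∈ U0), (-1:ℂ)^(ip u x).val)
      = if ∀ x ∈ U0, ip u x = 0 then ((2^(n/2) : ℕ) : ℂ) else 0 := by
    rw [sum_chi_submodule u U0, cardfilt U0 hdim0]
  have hSsif : ∀ s, (∑ x ∈ univ.filter (· ∈ U s), (-1:ℂ)^(ip u x).val)
      = if ∀ x ∈ U s, ip u x = 0 then ((2^(n/2) : ℕ) : ℂ) else 0 := by
    intro s
    rw [sum_chi_submodule u (U s), cardfilt (U s) (hdim s)]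
  show ‖gWHT (fun x => ∑ j, c j * F x j) u‖ = (2:ℝ) ^ ((n:ℝ)/2)
  by_cases hu : u = 0
  · -- u = 0
    subst hu
    have hS0 : (∑ x ∈ univ.filter (· ∈ U0), (-1:ℂ)^(ip (0 : Fin n → ZMod 2) x).val)
        = ((2^(n/2) : ℕ) : ℂ) := by
      rw [hS0if, if_pos (fun x _ => ip_zero_left x)]
    have hW : gWHT (fun x => ∑ j, c j * F x j) (0 : Fin n → ZMod 2) = ((2^(n/2) : ℕ) : ℂ) := by
      rw [Hval, hS0]
      rw [Finset.sum_congr rfl (fun s _ => by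
        rw [hSsif s, if_pos (fun x _ => ip_zero_left x)])]
      rw [← Finset.sum_mul, hZ, zero_mul, add_zero]
    rw [hW, Complex.norm_natCast, hRHS]
  · -- u ≠ 0 : the counting argument
    have htot : ∑ x : Fin n → ZMod 2, ((-1:ℂ))^(ip u x).val = 0 := by
      have hfilttop : univ.filter (· ∈ (⊤ : Submodule (ZMod 2) (Fin n → ZMod 2)))
          = (univ : Finset (Fin n → ZMod 2)) := by
        simp
      have h2 := sum_chi_submodule u (⊤ : Submodule (ZMod 2) (Fin n → ZMod 2))
      rw [hfilttop] at h2
      rw [h2, if_neg]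
      push_neg
      obtain ⟨i, hi⟩ : ∃ i, u i ≠ 0 := by
        by_contra h
        push_neg at h
        exact hu (funext h)
      exact ⟨Pi.single i 1, Submodule.mem_top, by rw [ip_single]; exact hi⟩
    -- sum identity: S0 + Σ_s Ss = 2^(n/2)
    have hsum1 : (∑ x ∈ univ.filter (· ∈ U0), ((-1:ℂ))^(ip u x).val)
        + (∑ s : Fin (2^(n/2)), ∑ x ∈ univ.filter (· ∈ U s), ((-1:ℂ))^(ip u x).val)
        = ((2^(n/2) : ℕ) : ℂ) := by
      have h1 := hsplit (fun x => ((-1:ℂ))^(ip u x).val)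
      rw [htot, chi0] at h1
      have h2 : ∑ x ∈ A0, ((-1:ℂ))^(ip u x).val
          = (∑ x ∈ univ.filter (· ∈ U0), ((-1:ℂ))^(ip u x).val) - 1 := by
        rw [hA0]; exact eraseSum U0
      have h3 : ∑ s : Fin (2^(n/2)), ∑ x ∈ As s, ((-1:ℂ))^(ip u x).val
          = (∑ s : Fin (2^(n/2)), ∑ x ∈ univ.filter (· ∈ U s), ((-1:ℂ))^(ip u x).val)
            - ((2^(n/2) : ℕ) : ℂ) := by
        have e : ∀ s : Fin (2^(n/2)), (∑ x ∈ As s, ((-1:ℂ))^(ip u x).val)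
            = (∑ x ∈ univ.filter (· ∈ U s), ((-1:ℂ))^(ip u x).val) - 1 :=
          fun s => eraseSum (U s)
        rw [Finset.sum_congr rfl (fun s _ => e s), Finset.sum_sub_distrib,
          Finset.sum_const, Finset.card_univ, Fintype.card_fin]
        push_cast
        ring
      rw [h2, h3] at h1
      linear_combination -h1
    -- counting
    have hcount : ((if ∀ x ∈ U0, ip u x = 0 then 1 else 0)
        + (univ.filter (fun s => ∀ x ∈ U s, ip u x = 0)).card : ℕ) = 1 := by
      have hNne : ((2^(n/2) : ℕ) : ℂ) ≠ 0 := Nat.cast_ne_zero.mpr (by positivity)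
      have h2 : (∑ s : Fin (2^(n/2)), ∑ x ∈ univ.filter (· ∈ U s), ((-1:ℂ))^(ip u x).val)
          = ((univ.filter (fun s => ∀ x ∈ U s, ip u x = 0)).card : ℂ) * ((2^(n/2) : ℕ) : ℂ) := by
        rw [Finset.sum_congr rfl (fun s _ => hSsif s), ← Finset.sum_filter,
          Finset.sum_const, nsmul_eq_mul]
      have h3 : (((if ∀ x ∈ U0, ip u x = 0 then 1 else 0)
          + (univ.filter (fun s => ∀ x ∈ U s, ip u x = 0)).card : ℕ) : ℂ) * ((2^(n/2) : ℕ) : ℂ)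
          = 1 * ((2^(n/2) : ℕ) : ℂ) := by
        have hL : (((if ∀ x ∈ U0, ip u x = 0 then 1 else 0)
            + (univ.filter (fun s => ∀ x ∈ U s, ip u x = 0)).card : ℕ) : ℂ)
              * ((2^(n/2) : ℕ) : ℂ)
            = (if ∀ x ∈ U0, ip u x = 0 then ((2^(n/2) : ℕ) : ℂ) else 0)
              + ((univ.filter (fun s => ∀ x ∈ U s, ip u x = 0)).card : ℂ)
                * ((2^(n/2) : ℕ) : ℂ) := by
          by_cases hP0 : ∀ x ∈ U0, ip u x = 0
          · rw [if_pos hP0, if_pos hP0]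
            push_cast
            ring
          · rw [if_neg hP0, if_neg hP0]
            push_cast
            ring
        rw [hL, ← hS0if, ← h2, hsum1, one_mul]
      have h4 := mul_right_cancel₀ hNne h3
      exact_mod_cast h4
    by_cases hP0 : ∀ x ∈ U0, ip u x = 0
    · -- the component through U0 : transform is 2^(n/2)
      have hK : (univ.filter (fun s => ∀ x ∈ U s, ip u x = 0)).card = 0 := by
        rw [if_pos hP0] at hcount
        omega
      have hnone : ∀ s, ¬ (∀ x ∈ U s, ip u x = 0) := by
        intro s hs
        have : s ∈ univ.filter (fun s => ∀ x ∈ U s, ip u x = 0) :=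
          Finset.mem_filter.mpr ⟨Finset.mem_univ s, hs⟩
        rw [Finset.card_eq_zero.mp hK] at this
        exact absurd this (Finset.notMem_empty s)
      have hW : gWHT (fun x => ∑ j, c j * F x j) u = ((2^(n/2) : ℕ) : ℂ) := by
        rw [Hval, hS0if, if_pos hP0]
        rw [Finset.sum_congr rfl (fun s _ => by
          rw [hSsif s, if_neg (hnone s), mul_zero])]
        rw [Finset.sum_const, smul_zero, add_zero]
      rw [hW, Complex.norm_natCast, hRHS]
    · -- the component through exactly one U s0
      have hK : (univ.filter (fun s => ∀ x ∈ U s, ip u x = 0)).card = 1 := by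
        rw [if_neg hP0] at hcount
        omega
      obtain ⟨s0, hs0⟩ := Finset.card_eq_one.mp hK
      have hW : gWHT (fun x => ∑ j, c j * F x j) u
          = zeta (2^t) ^ ((∑ j, c j * φ s0 j : ZMod (2^t))).val * ((2^(n/2) : ℕ) : ℂ) := by
        rw [Hval, hS0if, if_neg hP0, zero_add]
        rw [Finset.sum_congr rfl (fun s _ => by rw [hSsif s, mul_ite, mul_zero])]
        rw [← Finset.sum_filter, hs0, Finset.sum_singleton]
      rw [hW]
      rw [norm_mul, norm_pow, abszeta, one_pow, one_mul, Complex.norm_natCast, hRHS]
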